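/- Lemma 2.1(ii)–(iii), subcritical case, of the paper: fix θ₁, θ₂ > 0, a natural number n₁, and β̃ ≤ 1. For each natural number n₂ set β = β̃·n₂ and let φ_β^{(n₁,n₂)}(x) := x^{θ₁+n₁-1}(1-x)^{θ₂+n₂-1}e^{βx} / I(n₁,n₂,β), where I(n₁,n₂,β) := ∫₀¹ x^{θ₁+n₁-1}(1-x)^{θ₂+n₂-1}e^{βx} dx. Then the probability measures φ_{β̃n₂}^{(n₁,n₂)}(x) dx on [0,1] converge weakly to the Dirac measure δ₀ as n₂ → ∞; equivalently, for every bounded continuous function f : [0,1] → ℝ, lim_{n₂→∞} ∫₀¹ f(x) φ_{β̃n₂}^{(n₁,n₂)}(x) dx = f(0). (Taking β̃ = 0 gives the case of fixed β and n₂ → ∞.) -/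

import Mathlib

open Real Filter Topology MeasureTheory Set intervalIntegral

namespace PosteriorAux

noncomputable def gg (θ₁ θ₂ βt : ℝ) (n₁ n : ℕ) (x : ℝ) : ℝ :=
  x ^ (θ₁ + n₁ - 1) * (1 - x) ^ (θ₂ + n - 1) * Real.exp (βt * n * x)

noncomputable def pp (θ₁ θ₂ : ℝ) (n₁ : ℕ) (x : ℝ) : ℝ :=
  x ^ (θ₁ + n₁ - 1) * (1 - x) ^ (θ₂ - 1)

noncomputable def hh (βt x : ℝ) : ℝ := (1 - x) * Real.exp (βt * x)

lemma aux_integrable {p q : ℝ} (c : ℝ) (hp : -1 < p) (hq : -1 < q) :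
    IntervalIntegrable (fun x => x ^ p * (1 - x) ^ q * Real.exp (c * x)) volume 0 1 := by
  have h1 : IntervalIntegrable (fun x : ℝ => x ^ p * (1 - x) ^ q * Real.exp (c * x))
      volume 0 (1/2) := by
    have e : (fun x : ℝ => x ^ p * (1 - x) ^ q * Real.exp (c * x))
        = fun x : ℝ => x ^ p * ((1 - x) ^ q * Real.exp (c * x)) := by
      funext x; ring
    rw [e]
    apply (intervalIntegral.intervalIntegrable_rpow' hp).mul_continuousOn
    apply ContinuousOn.mul
    · apply ContinuousOn.rpow_const (continuousOn_const.sub continuousOn_id)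
      intro x hx
      rw [Set.uIcc_of_le (by norm_num : (0:ℝ) ≤ 1/2)] at hx
      left
      have := hx.2
      intro hcon
      simp only [Pi.sub_apply, id_eq, sub_eq_zero] at hcon
      linarith
    · exact (Real.continuous_exp.comp (continuous_const.mul continuous_id)).continuousOn
  have h2 : IntervalIntegrable (fun x : ℝ => x ^ p * (1 - x) ^ q * Real.exp (c * x))
      volume (1/2) 1 := by
    have e2 : (fun x : ℝ => x ^ p * (1 - x) ^ q * Real.exp (c * x))
        = fun x : ℝ => (1 - x) ^ q * (x ^ p * Real.exp (c * x)) := by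
      funext x; ring
    rw [e2]
    have base : IntervalIntegrable (fun x : ℝ => x ^ q) volume (1/2) 0 :=
      intervalIntegral.intervalIntegrable_rpow' hq
    have base2 := base.comp_sub_left 1
    norm_num at base2
    apply base2.mul_continuousOn
    apply ContinuousOn.mul
    · apply ContinuousOn.rpow_const continuousOn_id
      intro x hx
      rw [Set.uIcc_of_le (by norm_num : (1:ℝ)/2 ≤ 1)] at hx
      left
      have := hx.1
      intro hcon
      simp only [id_eq] at hcon
      linarith
    · exact (Real.continuous_exp.comp (continuous_const.mul continuous_id)).continuousOn
  exact h1.trans h2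

lemma gg_nonneg {θ₁ θ₂ βt : ℝ} {n₁ n : ℕ} {x : ℝ} (hx : x ∈ Icc (0:ℝ) 1) :
    0 ≤ gg θ₁ θ₂ βt n₁ n x :=
  mul_nonneg (mul_nonneg (Real.rpow_nonneg hx.1 _)
    (Real.rpow_nonneg (by linarith [hx.2]) _)) (Real.exp_pos _).le

lemma gg_pos {θ₁ θ₂ βt : ℝ} {n₁ n : ℕ} {x : ℝ} (hx : x ∈ Ioo (0:ℝ) 1) :
    0 < gg θ₁ θ₂ βt n₁ n x :=
  mul_pos (mul_pos (Real.rpow_pos_of_pos hx.1 _)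
    (Real.rpow_pos_of_pos (by linarith [hx.2]) _)) (Real.exp_pos _)

lemma pp_nonneg {θ₁ θ₂ : ℝ} {n₁ : ℕ} {x : ℝ} (hx : x ∈ Icc (0:ℝ) 1) :
    0 ≤ pp θ₁ θ₂ n₁ x :=
  mul_nonneg (Real.rpow_nonneg hx.1 _) (Real.rpow_nonneg (by linarith [hx.2]) _)

lemma pp_pos {θ₁ θ₂ : ℝ} {n₁ : ℕ} {x : ℝ} (hx : x ∈ Ioo (0:ℝ) 1) :
    0 < pp θ₁ θ₂ n₁ x :=
  mul_pos (Real.rpow_pos_of_pos hx.1 _) (Real.rpow_pos_of_pos (by linarith [hx.2]) _)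

lemma hh_nonneg {βt x : ℝ} (hx : x ≤ 1) : 0 ≤ hh βt x :=
  mul_nonneg (by linarith) (Real.exp_pos _).le

lemma hh_anti {βt : ℝ} (hβ : βt ≤ 1) : StrictAntiOn (hh βt) (Icc 0 1) := by
  have hd : ∀ x : ℝ, HasDerivAt (hh βt) (Real.exp (βt * x) * (βt * (1 - x) - 1)) x := by
    intro x
    have h1 : HasDerivAt (fun y : ℝ => 1 - y) (-1) x := by
      simpa using (hasDerivAt_id x).const_sub 1
    have h2 : HasDerivAt (fun y : ℝ => Real.exp (βt * y)) (Real.exp (βt * x) * βt) x := by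
      simpa [mul_comm, Function.comp_def] using (Real.hasDerivAt_exp (βt * x)).comp x
        ((hasDerivAt_id x).const_mul βt)
    have h3 := h1.mul h2
    exact h3.congr_deriv (by ring)
  apply strictAntiOn_of_deriv_neg (convex_Icc 0 1)
  · exact ((continuous_const.sub continuous_id).mul
      (Real.continuous_exp.comp (continuous_const.mul continuous_id))).continuousOn
  · intro x hx
    rw [interior_Icc] at hx
    rw [(hd x).deriv]
    have h3 : βt * (1 - x) - 1 < 0 := by
      nlinarith [mul_le_mul_of_nonneg_right hβ (show (0:ℝ) ≤ 1 - x by linarith [hx.2]),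
        hx.1, hx.2]
    exact mul_neg_of_pos_of_neg (Real.exp_pos _) h3

lemma gg_eq {θ₁ θ₂ βt : ℝ} (n₁ n : ℕ) {x : ℝ} (hx : x ∈ Ioo (0:ℝ) 1) :
    gg θ₁ θ₂ βt n₁ n x = pp θ₁ θ₂ n₁ x * hh βt x ^ n := by
  have h1 : (0:ℝ) < 1 - x := by linarith [hx.2]
  unfold gg pp hh
  rw [show θ₂ + (n:ℝ) - 1 = (θ₂ - 1) + (n:ℝ) by ring, Real.rpow_add h1,
    Real.rpow_natCast, show βt * (n:ℝ) * x = (n:ℝ) * (βt * x) by ring,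
    Real.exp_nat_mul, mul_pow]
  ring

end PosteriorAux

open PosteriorAux

/-- Lemma 2.1(ii)–(iii), subcritical case: with `β = β̃·n₂`, `β̃ ≤ 1`, the posterior
density `φ_{β̃n₂}^{(n₁,n₂)}(x) = x^{θ₁+n₁-1}(1-x)^{θ₂+n₂-1}e^{β̃n₂x}/I(n₁,n₂,β̃n₂)`
on `[0,1]` converges weakly to the Dirac measure `δ₀` as `n₂ → ∞`: for every
bounded continuous test function `f` on `[0,1]`,
`lim_{n₂→∞} ∫₀¹ f(x) φ_{β̃n₂}^{(n₁,n₂)}(x) dx = f(0)`. -/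
theorem posterior_weak_conv_subcritical (θ₁ θ₂ βt : ℝ)
    (hθ₁ : 0 < θ₁) (hθ₂ : 0 < θ₂) (hβ : βt ≤ 1) (n₁ : ℕ)
    (f : ℝ → ℝ) (hf : ContinuousOn f (Set.Icc 0 1)) :
    Filter.Tendsto (fun n₂ : ℕ =>
        ∫ x in (0:ℝ)..1,
          f x * (x ^ (θ₁ + n₁ - 1) * (1 - x) ^ (θ₂ + n₂ - 1) * Real.exp (βt * n₂ * x) /
            ∫ y in (0:ℝ)..1,
              y ^ (θ₁ + n₁ - 1) * (1 - y) ^ (θ₂ + n₂ - 1) * Real.exp (βt * n₂ * y)))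
      Filter.atTop (𝓝 (f 0)) := by
  show Filter.Tendsto (fun n : ℕ =>
      ∫ x in (0:ℝ)..1, f x * (gg θ₁ θ₂ βt n₁ n x / ∫ y in (0:ℝ)..1, gg θ₁ θ₂ βt n₁ n y))
    Filter.atTop (𝓝 (f 0))
  have ha : (-1:ℝ) < θ₁ + (n₁:ℝ) - 1 := by
    have h0 : (0:ℝ) ≤ (n₁:ℝ) := Nat.cast_nonneg n₁
    linarith
  have hggint : ∀ n : ℕ, IntervalIntegrable (gg θ₁ θ₂ βt n₁ n) volume 0 1 := by
    intro n
    have h0 : (0:ℝ) ≤ (n:ℝ) := Nat.cast_nonneg n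
    exact aux_integrable _ ha (by linarith)
  have hppint : IntervalIntegrable (pp θ₁ θ₂ n₁) volume 0 1 := by
    have h := aux_integrable (p := θ₁ + n₁ - 1) (q := θ₂ - 1) 0 ha (by linarith)
    simp only [zero_mul, Real.exp_zero, mul_one] at h
    exact h
  have hsub : ∀ u v : ℝ, 0 ≤ u → u ≤ v → v ≤ 1 → Set.uIcc u v ⊆ Set.uIcc (0:ℝ) 1 := by
    intro u v h1 h2 h3
    rw [Set.uIcc_of_le h2, Set.uIcc_of_le zero_le_one]
    exact Set.Icc_subset_Icc h1 h3
  rw [Metric.tendsto_atTop]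
  intro ε hε
  obtain ⟨M, hM⟩ := (isCompact_Icc : IsCompact (Icc (0:ℝ) 1)).exists_bound_of_continuousOn hf
  have hM0 : 0 ≤ M := le_trans (norm_nonneg (f 0)) (hM 0 ⟨le_refl 0, zero_le_one⟩)
  have hc0 : ContinuousWithinAt f (Icc 0 1) 0 := hf 0 ⟨le_refl 0, zero_le_one⟩
  obtain ⟨δ', hδ'pos, hδ'⟩ := Metric.continuousWithinAt_iff.mp hc0 (ε/2) (by linarith)
  set δ : ℝ := min (δ'/2) (1/2) with hδdef
  have hδpos : 0 < δ := lt_min (by linarith) (by norm_num)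
  have hδhalf : δ ≤ 1/2 := min_le_right _ _
  have hδδ' : δ < δ' := lt_of_le_of_lt (min_le_left _ _) (by linarith)
  set D : ℝ := hh βt δ with hDdef
  set E : ℝ := hh βt (δ/2) with hEdef
  have hE : 0 < E := mul_pos (by linarith) (Real.exp_pos _)
  have hD0 : 0 ≤ D := hh_nonneg (by linarith)
  have hDE : D < E :=
    hh_anti hβ ⟨by linarith, by linarith⟩ ⟨by linarith, by linarith⟩ (by linarith)
  have hq0 : 0 ≤ D / E := div_nonneg hD0 hE.le
  have hq1 : D / E < 1 := (div_lt_one hE).mpr hDE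
  set C1 : ℝ := ∫ x in δ..1, pp θ₁ θ₂ n₁ x with hC1def
  set c1 : ℝ := ∫ x in (δ/4)..(δ/2), pp θ₁ θ₂ n₁ x with hc1def
  have hC1 : 0 ≤ C1 := by
    rw [hC1def]
    exact intervalIntegral.integral_nonneg (by linarith)
      (fun x hx => pp_nonneg ⟨by linarith [hx.1], hx.2⟩)
  have hc1 : 0 < c1 := by
    rw [hc1def]
    exact intervalIntegral.intervalIntegral_pos_of_pos_on
      (hppint.mono_set (hsub _ _ (by linarith) (by linarith) (by linarith)))
      (fun x hx => pp_pos ⟨by linarith [hx.1], by linarith [hx.2]⟩)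
      (by linarith)
  have htend : Tendsto (fun n : ℕ => 2*M*C1/c1 * (D/E)^n) atTop (𝓝 0) := by
    simpa using (tendsto_pow_atTop_nhds_zero_of_lt_one hq0 hq1).const_mul (2*M*C1/c1)
  obtain ⟨N, hN⟩ := Filter.eventually_atTop.mp
    (htend.eventually_lt_const (show (0:ℝ) < ε/2 by linarith))
  refine ⟨N, fun n hn => ?_⟩
  set I : ℝ := ∫ y in (0:ℝ)..1, gg θ₁ θ₂ βt n₁ n y with hIdef
  have hIpos : 0 < I := by
    rw [hIdef]
    exact intervalIntegral.intervalIntegral_pos_of_pos_on (hggint n)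
      (fun x hx => gg_pos hx) one_pos
  have hae : 0 ≤ᵐ[volume.restrict (Ioc (0:ℝ) 1)] gg θ₁ θ₂ βt n₁ n := by
    rw [Filter.EventuallyLE, ae_restrict_iff' measurableSet_Ioc]
    filter_upwards with x hx
    simpa using gg_nonneg (θ₁ := θ₁) (θ₂ := θ₂) (βt := βt) (n₁ := n₁) (n := n) ⟨hx.1.le, hx.2⟩
  -- lower bound for I
  have hlowpt : ∀ x ∈ Icc (δ/4) (δ/2), E^n * pp θ₁ θ₂ n₁ x ≤ gg θ₁ θ₂ βt n₁ n x := by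
    intro x hx
    have hxIoo : x ∈ Ioo (0:ℝ) 1 := ⟨by linarith [hx.1], by linarith [hx.2]⟩
    rw [gg_eq n₁ n hxIoo, mul_comm]
    refine mul_le_mul_of_nonneg_left ?_ (pp_nonneg ⟨hxIoo.1.le, hxIoo.2.le⟩)
    exact pow_le_pow_left₀ hE.le
      ((hh_anti hβ).antitoneOn ⟨hxIoo.1.le, hxIoo.2.le⟩ ⟨by linarith, by linarith⟩ hx.2) n
  have hlow : E^n * c1 ≤ I := by
    have step2 : (∫ x in (δ/4)..(δ/2), E^n * pp θ₁ θ₂ n₁ x)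
        ≤ ∫ x in (δ/4)..(δ/2), gg θ₁ θ₂ βt n₁ n x :=
      intervalIntegral.integral_mono_on (by linarith)
        ((hppint.mono_set (hsub _ _ (by linarith) (by linarith) (by linarith))).const_mul _)
        ((hggint n).mono_set (hsub _ _ (by linarith) (by linarith) (by linarith)))
        hlowpt
    have step3 : (∫ x in (δ/4)..(δ/2), gg θ₁ θ₂ βt n₁ n x) ≤ I := by
      rw [hIdef]
      exact intervalIntegral.integral_mono_interval (by linarith) (by linarith) (by linarith)
        hae (hggint n)
    rw [intervalIntegral.integral_const_mul] at step2
    rw [hc1def]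
    exact le_trans step2 step3
  -- upper bound for tail
  have huppt : ∀ x ∈ Icc δ (1:ℝ), gg θ₁ θ₂ βt n₁ n x ≤ D^n * pp θ₁ θ₂ n₁ x := by
    intro x hx
    rcases lt_or_eq_of_le hx.2 with hx1 | hx1
    · have hxIoo : x ∈ Ioo (0:ℝ) 1 := ⟨by linarith [hx.1], hx1⟩
      rw [gg_eq n₁ n hxIoo, mul_comm (D^n)]
      refine mul_le_mul_of_nonneg_left ?_ (pp_nonneg ⟨hxIoo.1.le, hxIoo.2.le⟩)
      exact pow_le_pow_left₀ (hh_nonneg hx.2)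
        ((hh_anti hβ).antitoneOn ⟨hδpos.le, by linarith⟩ ⟨hxIoo.1.le, hx.2⟩ hx.1) n
    · subst hx1
      by_cases hθn : θ₂ + (n:ℝ) - 1 = 0
      · have hn0 : n = 0 := by
          by_contra hne
          have h1n : (1:ℝ) ≤ (n:ℝ) := by exact_mod_cast Nat.one_le_iff_ne_zero.mpr hne
          linarith
        subst hn0
        have hθ1 : θ₂ = 1 := by push_cast at hθn; linarith
        simp [gg, pp, hθ1, hDdef]
      · have hz : ((1:ℝ) - 1) ^ (θ₂ + (n:ℝ) - 1) = 0 := by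
          rw [sub_self]
          exact Real.zero_rpow hθn
        unfold gg
        rw [hz]
        rw [mul_zero, zero_mul]
        exact mul_nonneg (pow_nonneg hD0 n) (pp_nonneg ⟨zero_le_one, le_refl 1⟩)
  have hup : (∫ x in δ..1, gg θ₁ θ₂ βt n₁ n x) ≤ D^n * C1 := by
    have step : (∫ x in δ..1, gg θ₁ θ₂ βt n₁ n x) ≤ ∫ x in δ..1, D^n * pp θ₁ θ₂ n₁ x :=
      intervalIntegral.integral_mono_on (by linarith)
        ((hggint n).mono_set (hsub _ _ hδpos.le (by linarith) le_rfl))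
        ((hppint.mono_set (hsub _ _ hδpos.le (by linarith) le_rfl)).const_mul _)
        huppt
    rw [intervalIntegral.integral_const_mul] at step
    rw [hC1def]
    exact step
  -- integrability of products with f
  have hfsub : ContinuousOn (fun x => f x - f 0) (Set.uIcc (0:ℝ) 1) := by
    rw [Set.uIcc_of_le zero_le_one]
    exact hf.sub continuousOn_const
  have hfg_int : IntervalIntegrable (fun x => (f x - f 0) * gg θ₁ θ₂ βt n₁ n x) volume 0 1 :=
    (hggint n).continuousOn_mul hfsub
  have habs_int : IntervalIntegrable (fun x => |(f x - f 0) * gg θ₁ θ₂ βt n₁ n x|) volume 0 1 :=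
    hfg_int.abs
  have hfgg_int : IntervalIntegrable (fun x => f x * gg θ₁ θ₂ βt n₁ n x) volume 0 1 :=
    (hggint n).continuousOn_mul (by rw [Set.uIcc_of_le zero_le_one]; exact hf)
  have hrw1 : (∫ x in (0:ℝ)..1, f x * (gg θ₁ θ₂ βt n₁ n x / I))
      = (∫ x in (0:ℝ)..1, f x * gg θ₁ θ₂ βt n₁ n x) / I := by
    simp only [← mul_div_assoc]
    exact intervalIntegral.integral_div I (fun x => f x * gg θ₁ θ₂ βt n₁ n x)
  rw [hrw1, Real.dist_eq]
  have hnum_eq : (∫ x in (0:ℝ)..1, (f x - f 0) * gg θ₁ θ₂ βt n₁ n x)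
      = (∫ x in (0:ℝ)..1, f x * gg θ₁ θ₂ βt n₁ n x) - f 0 * I := by
    rw [hIdef, ← intervalIntegral.integral_const_mul,
      ← intervalIntegral.integral_sub hfgg_int ((hggint n).const_mul (f 0))]
    congr 1
    funext x
    ring
  have h2 : (∫ x in (0:ℝ)..1, f x * gg θ₁ θ₂ βt n₁ n x) / I - f 0
      = (∫ x in (0:ℝ)..1, (f x - f 0) * gg θ₁ θ₂ βt n₁ n x) / I := by
    rw [hnum_eq]
    field_simp
  rw [h2, abs_div, abs_of_pos hIpos]
  -- split the numerator
  have hsplit : (∫ x in (0:ℝ)..1, |(f x - f 0) * gg θ₁ θ₂ βt n₁ n x|)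
      = (∫ x in (0:ℝ)..δ, |(f x - f 0) * gg θ₁ θ₂ βt n₁ n x|)
        + ∫ x in δ..1, |(f x - f 0) * gg θ₁ θ₂ βt n₁ n x| :=
    (intervalIntegral.integral_add_adjacent_intervals
      (habs_int.mono_set (hsub 0 δ le_rfl hδpos.le (by linarith)))
      (habs_int.mono_set (hsub δ 1 hδpos.le (by linarith) le_rfl))).symm
  have h01 : (∫ x in (0:ℝ)..δ, |(f x - f 0) * gg θ₁ θ₂ βt n₁ n x|) ≤ ε/2 * I := by
    have hpt : ∀ x ∈ Icc (0:ℝ) δ,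
        |(f x - f 0) * gg θ₁ θ₂ βt n₁ n x| ≤ ε/2 * gg θ₁ θ₂ βt n₁ n x := by
      intro x hx
      have hx01 : x ∈ Icc (0:ℝ) 1 := ⟨hx.1, by linarith [hx.2]⟩
      rw [abs_mul, abs_of_nonneg (gg_nonneg hx01)]
      refine mul_le_mul_of_nonneg_right ?_ (gg_nonneg hx01)
      have hd := hδ' hx01 (show dist x 0 < δ' by
        rw [Real.dist_eq, sub_zero, abs_of_nonneg hx.1]; linarith [hx.2])
      rw [Real.dist_eq] at hd
      linarith
    calc (∫ x in (0:ℝ)..δ, |(f x - f 0) * gg θ₁ θ₂ βt n₁ n x|)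
        ≤ ∫ x in (0:ℝ)..δ, ε/2 * gg θ₁ θ₂ βt n₁ n x :=
          intervalIntegral.integral_mono_on hδpos.le
            (habs_int.mono_set (hsub 0 δ le_rfl hδpos.le (by linarith)))
            (((hggint n).mono_set (hsub 0 δ le_rfl hδpos.le (by linarith))).const_mul _) hpt
      _ = ε/2 * ∫ x in (0:ℝ)..δ, gg θ₁ θ₂ βt n₁ n x :=
          intervalIntegral.integral_const_mul _ _
      _ ≤ ε/2 * I := by
          refine mul_le_mul_of_nonneg_left ?_ (by linarith)
          rw [hIdef]
          exact intervalIntegral.integral_mono_interval le_rfl hδpos.le (by linarith)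
            hae (hggint n)
  have h02 : (∫ x in δ..1, |(f x - f 0) * gg θ₁ θ₂ βt n₁ n x|) ≤ 2*M*(D^n*C1) := by
    have hpt : ∀ x ∈ Icc δ (1:ℝ),
        |(f x - f 0) * gg θ₁ θ₂ βt n₁ n x| ≤ 2*M * gg θ₁ θ₂ βt n₁ n x := by
      intro x hx
      have hx01 : x ∈ Icc (0:ℝ) 1 := ⟨by linarith [hx.1], hx.2⟩
      rw [abs_mul, abs_of_nonneg (gg_nonneg hx01)]
      refine mul_le_mul_of_nonneg_right ?_ (gg_nonneg hx01)
      have h1 := hM x hx01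
      have h2 := hM 0 ⟨le_refl 0, zero_le_one⟩
      have h3 := norm_sub_le (f x) (f 0)
      simp only [Real.norm_eq_abs] at h1 h2 h3
      linarith
    calc (∫ x in δ..1, |(f x - f 0) * gg θ₁ θ₂ βt n₁ n x|)
        ≤ ∫ x in δ..1, 2*M * gg θ₁ θ₂ βt n₁ n x :=
          intervalIntegral.integral_mono_on (by linarith)
            (habs_int.mono_set (hsub δ 1 hδpos.le (by linarith) le_rfl))
            (((hggint n).mono_set (hsub δ 1 hδpos.le (by linarith) le_rfl)).const_mul _) hpt
      _ = 2*M * ∫ x in δ..1, gg θ₁ θ₂ βt n₁ n x :=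
          intervalIntegral.integral_const_mul _ _
      _ ≤ 2*M*(D^n*C1) := mul_le_mul_of_nonneg_left hup (by linarith)
  have habs : |∫ x in (0:ℝ)..1, (f x - f 0) * gg θ₁ θ₂ βt n₁ n x|
      ≤ ε/2*I + 2*M*(D^n*C1) := by
    calc |∫ x in (0:ℝ)..1, (f x - f 0) * gg θ₁ θ₂ βt n₁ n x|
        ≤ ∫ x in (0:ℝ)..1, |(f x - f 0) * gg θ₁ θ₂ βt n₁ n x| :=
          intervalIntegral.abs_integral_le_integral_abs zero_le_one
      _ = _ := hsplit
      _ ≤ ε/2*I + 2*M*(D^n*C1) := add_le_add h01 h02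
  have hEn : (0:ℝ) < E^n := pow_pos hE n
  have hEc : (0:ℝ) < E^n * c1 := mul_pos hEn hc1
  calc |∫ x in (0:ℝ)..1, (f x - f 0) * gg θ₁ θ₂ βt n₁ n x| / I
      ≤ (ε/2*I + 2*M*(D^n*C1)) / I := by
        exact div_le_div_of_nonneg_right habs hIpos.le
    _ = ε/2 + 2*M*(D^n*C1)/I := by
        rw [add_div, mul_div_assoc, div_self hIpos.ne', mul_one]
    _ ≤ ε/2 + 2*M*(D^n*C1)/(E^n*c1) := by
        have hTnonneg : 0 ≤ 2*M*(D^n*C1) :=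
          mul_nonneg (by linarith) (mul_nonneg (pow_nonneg hD0 n) hC1)
        have := div_le_div_of_nonneg_left hTnonneg hEc hlow
        linarith
    _ = ε/2 + 2*M*C1/c1 * (D/E)^n := by
        rw [div_pow]
        field_simp
    _ < ε/2 + ε/2 := by linarith [hN n hn]
    _ = ε := by ring
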